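/- Dichotomy theorem: Every quasi-ordered ring (R, ⪯) is either an ordered ring (⪯ satisfies (O1)–(O4)), or else there exists a valuation v on R such that x ⪯ y ⇔ v(y) ≤ v(x) for all x, y ∈ R. Moreover, the support E₀ of ⪯ coincides with the support of this order, respectively of this valuation. -/

import Mathlib

/-- A valuation on a commutative ring `R`, bundled with its value group. -/
structure RingValuation (R : Type) [CommRing R] where
  Γ : Type
  [grp : AddCommGroup Γ]
  [ord : LinearOrder Γ]
  [isOrd : IsOrderedAddMonoid Γ]
  v : R → WithTop Γ
  map_zero : v 0 = ⊤
  map_one : v 1 = 0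
  map_mul : ∀ x y : R, v (x * y) = v x + v y
  map_add : ∀ x y : R, min (v x) (v y) ≤ v (x + y)

attribute [instance] RingValuation.grp
attribute [instance] RingValuation.ord
attribute [instance] RingValuation.isOrd

namespace QORProof

/-- A quasi-ordered ring, bundled. -/
structure QO (R : Type) [CommRing R] where
  le : R → R → Prop
  hrefl : ∀ x : R, le x x
  htrans : ∀ x y z : R, le x y → le y z → le x z
  htotal : ∀ x y : R, le x y ∨ le y x
  hQR1 : le 0 1 ∧ ¬ le 1 0
  hQR2 : ∀ x y : R, le (x * y) 0 → le x 0 ∨ le y 0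
  hQR3 : ∀ x y z : R, le x y → le 0 z → le (x * z) (y * z)
  hQR4 : ∀ x y z : R, le x y → ¬ (le z y ∧ le y z) → le (x + z) (y + z)
  hQR5 : ∀ x y z : R, le 0 z → ¬ le z 0 → le (x * z) (y * z) → le x y

variable {R : Type} [CommRing R]

namespace QO

variable (q : QO R)

/-- equivalence associated to the quasi-order -/
abbrev sim (a b : R) : Prop := q.le a b ∧ q.le b a

variable {q}

lemma le_congr {a b a' b' : R} (ha : a = a') (hb : b = b') (h : q.le a b) : q.le a' b' :=
  ha ▸ hb ▸ h

lemma sim_of_eq {a b : R} (h : a = b) : q.sim a b := by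
  subst h; exact ⟨q.hrefl a, q.hrefl a⟩

lemma sim_refl (a : R) : q.sim a a := ⟨q.hrefl a, q.hrefl a⟩

lemma sim_symm {a b : R} (h : q.sim a b) : q.sim b a := ⟨h.2, h.1⟩

lemma sim_trans {a b c : R} (h1 : q.sim a b) (h2 : q.sim b c) : q.sim a c :=
  ⟨q.htrans _ _ _ h1.1 h2.1, q.htrans _ _ _ h2.2 h1.2⟩

lemma sim_congr {a b a' b' : R} (ha : a = a') (hb : b = b') (h : q.sim a b) : q.sim a' b' :=
  ha ▸ hb ▸ h

/-- generic: the support is closed under negation -/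
lemma E0_neg {x : R} (hx : q.sim x 0) : q.sim (-x) 0 := by
  by_contra h
  have h1 : q.le 0 (-x) :=
    le_congr (by ring) (by ring) (q.hQR4 x 0 (-x) hx.1 (fun hc => h ⟨hc.1, hc.2⟩))
  have h2 : q.le (-x) 0 := by
    refine le_congr (by ring) (by ring) (q.hQR4 0 x (-x) hx.2 ?_)
    rintro ⟨hc1, hc2⟩
    exact h ⟨q.htrans _ _ _ hc1 hx.1, q.htrans _ _ _ hx.2 hc2⟩
  exact h ⟨h2, h1⟩

/-- generic: adding a support element to a non-support element keeps the class -/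
lemma sim_add_of_E0 {x y : R} (hx : q.sim x 0) (hy : ¬ q.sim y 0) : q.sim (x + y) y := by
  constructor
  · exact le_congr rfl (by ring) (q.hQR4 x 0 y hx.1 (fun hc => hy ⟨hc.1, hc.2⟩))
  · refine le_congr (by ring) rfl (q.hQR4 0 x y hx.2 ?_)
    rintro ⟨hc1, hc2⟩
    exact hy ⟨q.htrans _ _ _ hc1 hx.1, q.htrans _ _ _ hx.2 hc2⟩

/-- generic: the support is closed under addition -/
lemma E0_add {x y : R} (hx : q.sim x 0) (hy : q.sim y 0) : q.sim (x + y) 0 := by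
  by_contra h
  have h1 : q.sim (-x + (x + y)) (x + y) := sim_add_of_E0 (E0_neg hx) h
  have h2 : q.sim y (x + y) := sim_congr (by ring) rfl h1
  exact h (sim_trans (sim_symm h2) hy)

/-- generic: nonpositive elements negate to nonnegative ones -/
lemma neg_nonneg' {a : R} (ha : q.le a 0) : q.le 0 (-a) := by
  by_contra hn
  exact hn (le_congr (by ring) (by ring) (q.hQR4 a 0 (-a) ha (fun hc => hn hc.2)))

section BranchA

variable (hA : q.le (-1 : R) 0)

include hA

lemma a_pos_not_sim_neg {a : R} (ha : q.le 0 a) (ha' : ¬ q.le a 0) : ¬ q.le a (-a) := by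
  intro h
  have h1 : q.le 1 (-1 : R) :=
    q.hQR5 1 (-1) a ha ha' (le_congr (by ring) (by ring) h)
  exact q.hQR1.2 (q.htrans _ _ _ h1 hA)

lemma a_neg_nonpos {a : R} (ha : q.le 0 a) (ha' : ¬ q.le a 0) :
    q.le (-a) 0 ∧ ¬ q.le 0 (-a) := by
  have first : q.le (-a) 0 := by
    by_contra hn
    have h0na : q.le 0 (-a) := (q.htotal (-a) 0).resolve_left hn
    have hna : ¬ q.le (-a) (-(-a)) := a_pos_not_sim_neg hA h0na hn
    have h2 : q.le (-a) a := (q.htotal a (-a)).resolve_left (a_pos_not_sim_neg hA ha ha')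
    exact hna (le_congr rfl (by ring) h2)
  refine ⟨first, fun h => ?_⟩
  have h1 : q.sim (-a) 0 := ⟨first, h⟩
  have h2 : q.sim a 0 := sim_congr (by ring) rfl (E0_neg h1)
  exact ha' h2.1

lemma a_nonneg_add {a b : R} (ha : q.le 0 a) (hb : q.le 0 b) : q.le 0 (a + b) := by
  by_cases hc : q.le b a ∧ q.le a b
  · by_cases ha0 : q.le a 0
    · have hE : q.sim (a + b) 0 := E0_add ⟨ha0, ha⟩ ⟨q.htrans _ _ _ hc.1 ha0, hb⟩
      exact hE.2
    · by_contra hn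
      have hab : q.le (a + b) 0 := (q.htotal (a + b) 0).resolve_right hn
      have hna := a_neg_nonpos hA ha ha0
      have h4 := q.hQR4 (a + b) 0 (-a) hab (fun hcc => hna.2 hcc.2)
      have h5 : q.le b (-a) := le_congr (by ring) (by ring) h4
      exact hna.2 (q.htrans _ _ _ hb h5)
  · have h4 := q.hQR4 0 a b ha hc
    exact q.htrans _ _ _ hb (le_congr (by ring) rfl h4)

lemma a_sub_nonneg {x y : R} (h : q.le x y) : q.le 0 (y - x) := by
  by_cases hc : q.le (-x) y ∧ q.le y (-x)
  · by_cases hx0 : q.sim x 0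
    · have h1 : q.sim (-x) 0 := E0_neg hx0
      have h2 : q.sim y 0 := sim_trans ⟨hc.2, hc.1⟩ h1
      have h3 : q.sim (y + -x) 0 := E0_add h2 h1
      exact le_congr rfl (by ring) h3.2
    · by_cases hx1 : q.le x 0
      · have h0x : q.le 0 (-x) := neg_nonneg' hx1
        have h0y : q.le 0 y := q.htrans _ _ _ h0x hc.1
        have h5 := a_nonneg_add hA h0y h0x
        exact le_congr rfl (by ring) h5
      · have h0a : q.le 0 x := (q.htotal x 0).resolve_left hx1
        exact absurd (q.htrans _ _ _ h hc.2) (a_pos_not_sim_neg hA h0a hx1)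
  · exact le_congr (by ring) (by ring) (q.hQR4 x y (-x) h hc)

lemma a_le_of_sub_nonneg {x y : R} (h : q.le 0 (y - x)) : q.le x y := by
  by_cases hc : q.le x (y - x) ∧ q.le (y - x) x
  · by_cases hx0 : q.sim x 0
    · have h1 : q.sim (y - x) 0 := sim_trans ⟨hc.2, hc.1⟩ hx0
      have h2 : q.sim y 0 := sim_congr (by ring) rfl (E0_add h1 hx0)
      exact q.htrans _ _ _ hx0.1 h2.2
    · have h0x : q.le 0 x := q.htrans _ _ _ h hc.2
      have hx1 : ¬ q.le x 0 := fun hh => hx0 ⟨hh, h0x⟩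
      by_contra hn
      have hyx : q.le y x := (q.htotal x y).resolve_left hn
      have h4 := q.hQR4 y x (-x) hyx (fun hcc => (a_pos_not_sim_neg hA h0x hx1) hcc.2)
      have h5 : q.le (y - x) 0 := le_congr (by ring) (by ring) h4
      exact hx1 (q.htrans _ _ _ hc.1 h5)
  · exact le_congr (by ring) (by ring) (q.hQR4 0 (y - x) x h hc)

lemma a_add {x y : R} (h : q.le x y) (z : R) : q.le (x + z) (y + z) :=
  a_le_of_sub_nonneg hA (le_congr rfl (by ring) (a_sub_nonneg hA h))

end BranchA

end QO

/-- A quasi-ordered ring which is not an ordered ring. -/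
structure QOB (R : Type) [CommRing R] extends QO R where
  hB : ¬ toQO.le (-1 : R) 0

namespace QOB

variable {R : Type} [CommRing R] (p : QOB R)

lemma b01 : p.le 0 (-1 : R) := (p.htotal (-1) 0).resolve_left p.hB

lemma b_one_neg : p.sim (1 : R) (-1) := by
  rcases p.htotal 1 (-1) with h | h
  · exact ⟨h, QO.le_congr (by ring) (by ring) (p.hQR3 1 (-1) (-1) h p.b01)⟩
  · exact ⟨QO.le_congr (by ring) (by ring) (p.hQR3 (-1) 1 (-1) h p.b01), h⟩

lemma b_bot (x : R) : p.le 0 x := by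
  by_contra hx
  have hx0 : p.le x 0 := (p.htotal x 0).resolve_right hx
  have hnx : ¬ p.le 0 (-x) := by
    intro h
    have h2 := p.hQR3 1 (-1) (-x) p.b_one_neg.1 h
    have h3 : p.le (-x) x := QO.le_congr (by ring) (by ring) h2
    exact hx (p.htrans _ _ _ h h3)
  exact hnx (QO.le_congr (by ring) (by ring) (p.hQR4 x 0 (-x) hx0 (fun hc => hnx hc.2)))

lemma b_sim_neg (x : R) : p.sim x (-x) :=
  ⟨QO.le_congr (by ring) (by ring) (p.hQR3 1 (-1) x p.b_one_neg.1 (p.b_bot x)),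
   QO.le_congr (by ring) (by ring) (p.hQR3 (-1) 1 x p.b_one_neg.2 (p.b_bot x))⟩

variable {p}

lemma b_mul {a b : R} (c : R) (h : p.le a b) : p.le (a * c) (b * c) :=
  p.hQR3 a b c h (p.b_bot c)

lemma b_cancel {a b c : R} (hc : ¬ p.le c 0) (h : p.le (a * c) (b * c)) : p.le a b :=
  p.hQR5 a b c (p.b_bot c) hc h

lemma b_sim_mul {a b : R} (c : R) (h : p.sim a b) : p.sim (a * c) (b * c) :=
  ⟨b_mul c h.1, b_mul c h.2⟩

lemma b_ne0_mul {x y : R} (hx : ¬ p.le x 0) (hy : ¬ p.le y 0) : ¬ p.le (x * y) 0 :=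
  fun h => (p.hQR2 x y h).elim hx hy

lemma b_of_not_subadd {x y : R} (hxy : p.le x y) (h : ¬ p.le (x + y) y) : p.sim x y := by
  have hcond : ¬ (p.le (-(x + y)) y ∧ p.le y (-(x + y))) := by
    rintro ⟨h1, _⟩
    exact h (p.htrans _ _ _ (p.b_sim_neg (x + y)).1 h1)
  have h5 : p.le (-y) (-x) := QO.le_congr (by ring) (by ring) (p.hQR4 x y (-(x + y)) hxy hcond)
  exact ⟨hxy, p.htrans _ _ _ (p.b_sim_neg y).1 (p.htrans _ _ _ h5 (p.b_sim_neg x).2)⟩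

lemma b_subadd_of_strict {x y : R} (hxy : p.le x y) (hyx : ¬ p.le y x) : p.le (x + y) y := by
  by_contra h
  exact hyx (b_of_not_subadd hxy h).2

lemma b_strict_sim {x y : R} (hxy : p.le x y) (hyx : ¬ p.le y x) : p.sim (x + y) y := by
  refine ⟨b_subadd_of_strict hxy hyx, ?_⟩
  by_contra hyt
  have hty : p.le (x + y) y := b_subadd_of_strict hxy hyx
  have hcond : ¬ (p.le (-x) y ∧ p.le y (-x)) := by
    rintro ⟨_, h2⟩
    exact hyx (p.htrans _ _ _ h2 (p.b_sim_neg x).2)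
  have h5 : p.le y (y + -x) := QO.le_congr (by ring) rfl (p.hQR4 (x + y) y (-x) hty hcond)
  have hnxy : p.le (-x) y := p.htrans _ _ _ (p.b_sim_neg x).2 hxy
  have hstr : ¬ p.le y (-x) := fun h2 => hyx (p.htrans _ _ _ h2 (p.b_sim_neg x).2)
  have h7 : p.le (y + -x) y := QO.le_congr (by ring) rfl (b_subadd_of_strict hnxy hstr)
  have hcond2 : ¬ (p.le x y ∧ p.le y x) := fun hc => hyx hc.2
  have h9 : p.le y (y + x) := QO.le_congr (by ring) rfl (p.hQR4 (y + -x) y x h7 hcond2)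
  exact hyt (QO.le_congr rfl (by ring) h9)

/-- subadditivity: the key valuation-theoretic fact -/
lemma b_subadd {x y : R} (h : p.le x y) : p.le (x + y) y := by
  by_contra hs
  have hytx : p.le y (x + y) := (p.htotal (x + y) y).resolve_left hs
  have hnx : ¬ p.le (x + y) x := fun h2 => hs (p.htrans _ _ _ h2 h)
  have h1 : p.le (-y) (x + y) := p.htrans _ _ _ (p.b_sim_neg y).2 hytx
  have h2 : ¬ p.le (x + y) (-y) := fun hc => hs (p.htrans _ _ _ hc (p.b_sim_neg y).2)
  have h3 := b_strict_sim h1 h2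
  exact hnx (QO.le_congr rfl (by ring) h3.2)

variable (p)

/-- nonzero classes -/
abbrev Pos : Type := {x : R // ¬ p.le x 0}

def pmul (a b : p.Pos) : p.Pos := ⟨a.1 * b.1, b_ne0_mul a.2 b.2⟩

def pone : p.Pos := ⟨1, p.hQR1.2⟩

@[simp] lemma pmul_val (a b : p.Pos) : (p.pmul a b).1 = a.1 * b.1 := rfl

@[simp] lemma pone_val : (p.pone).1 = 1 := rfl

/-- the setoid on pairs (formal quotients) of nonzero classes -/
def sd : Setoid (p.Pos × p.Pos) where
  r u w := p.sim (u.1.1 * w.2.1) (w.1.1 * u.2.1)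
  iseqv := by
    refine ⟨fun u => QO.sim_refl _, fun {u w} h => QO.sim_symm h, ?_⟩
    rintro ⟨a, b⟩ ⟨c, d⟩ ⟨e, f⟩ h1 h2
    constructor
    · have s1 := b_mul f.1 h1.1
      have s2 := b_mul b.1 h2.1
      have s3 : p.le (a.1 * d.1 * f.1) (e.1 * d.1 * b.1) :=
        p.htrans _ _ _ s1 (QO.le_congr (by ring) (by ring) s2)
      exact b_cancel d.2 (QO.le_congr (by ring) (by ring) s3)
    · have s1 := b_mul b.1 h2.2
      have s2 := b_mul f.1 h1.2
      have s3 : p.le (e.1 * d.1 * b.1) (a.1 * d.1 * f.1) :=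
        p.htrans _ _ _ s1 (QO.le_congr (by ring) (by ring) s2)
      exact b_cancel d.2 (QO.le_congr (by ring) (by ring) s3)

/-- the value group -/
def VG : Type := Quotient p.sd

def gmk (a b : p.Pos) : p.VG := Quotient.mk p.sd (a, b)

variable {p}

lemma gle_wd1 {u w u' w' : p.Pos × p.Pos} (hu : p.sd.r u u') (hw : p.sd.r w w')
    (h : p.le (w.1.1 * u.2.1) (u.1.1 * w.2.1)) :
    p.le (w'.1.1 * u'.2.1) (u'.1.1 * w'.2.1) := by
  obtain ⟨⟨a, _⟩, ⟨b, hb⟩⟩ := u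
  obtain ⟨⟨c, _⟩, ⟨d, hd⟩⟩ := w
  obtain ⟨⟨a', _⟩, ⟨b', _⟩⟩ := u'
  obtain ⟨⟨c', _⟩, ⟨d', _⟩⟩ := w'
  simp only [Setoid.r] at *
  -- hu : sim (a*b') (a'*b) ; hw : sim (c*d') (c'*d) ; h : le (c*b) (a*d)
  have s1 : p.le (c * b * (b' * d')) (a * d * (b' * d')) := b_mul _ h
  have s2 : p.le (c' * d * (b * b')) (c * d' * (b * b')) := b_mul _ hw.2
  have s3 : p.le (a * b' * (d * d')) (a' * b * (d * d')) := b_mul _ hu.1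
  have s4 : p.le (c' * d * (b * b')) (a * d * (b' * d')) :=
    p.htrans _ _ _ s2 (QO.le_congr (by ring) rfl s1)
  have s5 : p.le (c' * d * (b * b')) (a' * b * (d * d')) :=
    p.htrans _ _ _ s4 (QO.le_congr (by ring) rfl s3)
  have s6 : p.le (c' * b' * (b * d)) (a' * d' * (b * d)) :=
    QO.le_congr (by ring) (by ring) s5
  exact b_cancel (b_ne0_mul hb hd) s6

variable (p)

def gle : p.VG → p.VG → Prop :=
  Quotient.lift₂ (fun u w => p.le (w.1.1 * u.2.1) (u.1.1 * w.2.1))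
    (fun u w u' w' hu hw =>
      propext ⟨fun h => gle_wd1 hu hw h,
        fun h => gle_wd1 (p.sd.iseqv.symm hu) (p.sd.iseqv.symm hw) h⟩)

def gadd : p.VG → p.VG → p.VG :=
  Quotient.lift₂ (fun u w => p.gmk (p.pmul u.1 w.1) (p.pmul u.2 w.2))
    (by
      rintro ⟨a, b⟩ ⟨c, d⟩ ⟨a', b'⟩ ⟨c', d'⟩ hu hw
      apply Quotient.sound
      show p.sim _ _
      have t1 : p.sim (a.1 * b'.1 * (c.1 * d'.1)) (a'.1 * b.1 * (c.1 * d'.1)) :=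
        b_sim_mul _ hu
      have t2 : p.sim (c.1 * d'.1 * (a'.1 * b.1)) (c'.1 * d.1 * (a'.1 * b.1)) :=
        b_sim_mul _ hw
      refine QO.sim_congr (by simp only [pmul_val]; ring) (by simp only [pmul_val]; ring)
        (QO.sim_trans t1 (QO.sim_congr (by ring) rfl t2)))

def gzero : p.VG := p.gmk p.pone p.pone

def gneg : p.VG → p.VG :=
  Quotient.lift (fun u => p.gmk u.2 u.1)
    (by
      rintro ⟨a, b⟩ ⟨a', b'⟩ hu
      apply Quotient.sound
      show p.sim _ _
      exact QO.sim_congr (by ring) (by ring) (QO.sim_symm hu))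

instance : Zero p.VG := ⟨p.gzero⟩
instance : Add p.VG := ⟨p.gadd⟩
instance : Neg p.VG := ⟨p.gneg⟩

def gGroup : AddCommGroup p.VG where
  add := (· + ·)
  zero := 0
  neg := (- ·)
  nsmul := nsmulRec
  zsmul := zsmulRec
  add_assoc := by
    rintro ⟨⟨a, b⟩⟩ ⟨⟨c, d⟩⟩ ⟨⟨e, f⟩⟩
    apply Quotient.sound
    exact QO.sim_of_eq (by simp only [pmul_val, pone_val]; ring)
  zero_add := by
    rintro ⟨⟨a, b⟩⟩
    apply Quotient.sound
    exact QO.sim_of_eq (by simp only [pmul_val, pone_val]; ring)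
  add_zero := by
    rintro ⟨⟨a, b⟩⟩
    apply Quotient.sound
    exact QO.sim_of_eq (by simp only [pmul_val, pone_val]; ring)
  add_comm := by
    rintro ⟨⟨a, b⟩⟩ ⟨⟨c, d⟩⟩
    apply Quotient.sound
    exact QO.sim_of_eq (by simp only [pmul_val, pone_val]; ring)
  neg_add_cancel := by
    rintro ⟨⟨a, b⟩⟩
    apply Quotient.sound
    exact QO.sim_of_eq (by simp only [pmul_val, pone_val]; ring)

def gPO : PartialOrder p.VG where
  le := p.gle
  le_refl := by
    rintro ⟨⟨a, b⟩⟩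
    exact p.hrefl _
  le_trans := by
    rintro ⟨⟨a, b⟩⟩ ⟨⟨c, d⟩⟩ ⟨⟨e, f⟩⟩ h1 h2
    show p.le (e.1 * b.1) (a.1 * f.1)
    have s1 : p.le (c.1 * b.1 * f.1) (a.1 * d.1 * f.1) := b_mul _ h1
    have s2 : p.le (e.1 * d.1 * b.1) (c.1 * f.1 * b.1) := b_mul _ h2
    have s3 : p.le (e.1 * b.1 * d.1) (a.1 * f.1 * d.1) :=
      p.htrans _ _ _ (QO.le_congr (by ring) (by ring) s2)
        (QO.le_congr rfl (by ring) s1)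
    exact b_cancel d.2 s3
  le_antisymm := by
    rintro ⟨⟨a, b⟩⟩ ⟨⟨c, d⟩⟩ h1 h2
    exact Quotient.sound ⟨h2, h1⟩

noncomputable def gLin : LinearOrder p.VG :=
  { p.gPO with
    le_total := by
      rintro ⟨⟨a, b⟩⟩ ⟨⟨c, d⟩⟩
      exact (p.htotal _ _).symm
    toDecidableLE := fun _ _ => Classical.dec _ }

noncomputable instance instVGAddCommGroup : AddCommGroup p.VG := p.gGroup
noncomputable instance instVGLin : LinearOrder p.VG := p.gLin
noncomputable instance instVGGroup : IsOrderedAddMonoid p.VG :=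
  { add_le_add_left := by
      rintro ⟨⟨a, b⟩⟩ ⟨⟨c, d⟩⟩ h ⟨⟨e, f⟩⟩
      show p.le (c.1 * e.1 * (b.1 * f.1)) (a.1 * e.1 * (d.1 * f.1))
      have s1 : p.le (c.1 * b.1 * (e.1 * f.1)) (a.1 * d.1 * (e.1 * f.1)) := b_mul _ h
      exact QO.le_congr (by ring) (by ring) s1 }

open Classical in
noncomputable def vfun (x : R) : WithTop p.VG :=
  if h : p.le x 0 then ⊤ else ((p.gmk ⟨x, h⟩ p.pone : p.VG) : WithTop p.VG)

variable {p}

lemma vfun_le_iff (x y : R) : p.le x y ↔ p.vfun y ≤ p.vfun x := by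
  by_cases hy : p.le y 0 <;> by_cases hx : p.le x 0
  · rw [vfun, vfun, dif_pos hy, dif_pos hx]
    simp only [le_refl, iff_true]
    exact p.htrans _ _ _ hx (p.b_bot y)
  · rw [vfun, vfun, dif_pos hy, dif_neg hx]
    constructor
    · intro h; exact absurd (p.htrans _ _ _ h hy) hx
    · intro h; exact absurd (top_le_iff.1 h) (WithTop.coe_ne_top)
  · rw [vfun, vfun, dif_neg hy, dif_pos hx]
    simp only [le_top, iff_true]
    exact p.htrans _ _ _ hx (p.b_bot y)
  · rw [vfun, vfun, dif_neg hy, dif_neg hx, WithTop.coe_le_coe]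
    have : (p.gmk ⟨y, hy⟩ p.pone ≤ p.gmk ⟨x, hx⟩ p.pone) ↔ p.le (x * 1) (y * 1) := Iff.rfl
    rw [this, mul_one, mul_one]

lemma vfun_eq_top_iff (x : R) : p.vfun x = ⊤ ↔ p.le x 0 := by
  rw [vfun]
  split_ifs with h
  · simp [h]
  · simp [h, WithTop.coe_ne_top]

lemma vfun_zero : p.vfun 0 = ⊤ := by rw [vfun, dif_pos (p.hrefl 0)]

lemma vfun_one : p.vfun 1 = 0 := by
  rw [vfun, dif_neg p.hQR1.2]
  rfl

lemma vfun_mul (x y : R) : p.vfun (x * y) = p.vfun x + p.vfun y := by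
  by_cases hx : p.le x 0
  · have hxy : p.le (x * y) 0 :=
      QO.le_congr rfl (by ring) (p.hQR3 x 0 y hx (p.b_bot y))
    simp only [vfun]
    rw [dif_pos hx, dif_pos hxy, WithTop.top_add]
  · by_cases hy : p.le y 0
    · have hxy : p.le (x * y) 0 :=
        QO.le_congr (by ring) (by ring) (p.hQR3 y 0 x hy (p.b_bot x))
      simp only [vfun]
      rw [dif_pos hy, dif_pos hxy, WithTop.add_top]
    · have hxy : ¬ p.le (x * y) 0 := b_ne0_mul hx hy
      simp only [vfun]
      rw [dif_neg hx, dif_neg hy, dif_neg hxy, ← WithTop.coe_add]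
      congr 1
      apply Quotient.sound
      exact QO.sim_of_eq (by simp only [pmul_val, pone_val]; ring)

lemma vfun_add (x y : R) : min (p.vfun x) (p.vfun y) ≤ p.vfun (x + y) := by
  rcases p.htotal x y with h | h
  · rw [min_eq_right ((vfun_le_iff x y).1 h)]
    exact (vfun_le_iff (x + y) y).1 (b_subadd h)
  · rw [min_eq_left ((vfun_le_iff y x).1 h), add_comm]
    exact (vfun_le_iff (y + x) x).1 (b_subadd h)

variable (p)

noncomputable def val : RingValuation R where
  Γ := p.VG
  v := p.vfun
  map_zero := vfun_zero
  map_one := vfun_one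
  map_mul := vfun_mul
  map_add := vfun_add

end QOB

end QORProof

/-- Dichotomy: a quasi-ordered ring is either an ordered ring (with the same support),
or else there is a valuation `v` on `R` with `x ⪯ y ⇔ v(y) ≤ v(x)` whose support is
the support of the quasi-order. -/
theorem quasiOrderedRing_dichotomy
    {R : Type} [CommRing R] (le : R → R → Prop)
    (hrefl : ∀ x : R, le x x)
    (htrans : ∀ x y z : R, le x y → le y z → le x z)
    (htotal : ∀ x y : R, le x y ∨ le y x)
    (hQR1 : le 0 1 ∧ ¬ le 1 0)
    (hQR2 : ∀ x y : R, le (x * y) 0 → le x 0 ∨ le y 0)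
    (hQR3 : ∀ x y z : R, le x y → le 0 z → le (x * z) (y * z))
    (hQR4 : ∀ x y z : R, le x y → ¬ (le z y ∧ le y z) → le (x + z) (y + z))
    (hQR5 : ∀ x y z : R, le 0 z → ¬ le z 0 → le (x * z) (y * z) → le x y) :
    -- either `le` is an order on `R` (its support is then the support `E₀` of `⪯`)
    ((le 0 1 ∧ ¬ le 1 0) ∧
     (∀ x y : R, le (x * y) 0 → le x 0 ∨ le y 0) ∧
     (∀ x y z : R, le x y → le 0 z → le (x * z) (y * z)) ∧
     (∀ x y z : R, le x y → le (x + z) (y + z)))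
    ∨
    -- or `le` is induced by a valuation on `R` whose support is `E₀`
    (∃ V : RingValuation R,
      (∀ x y : R, le x y ↔ V.v y ≤ V.v x) ∧
      (∀ x : R, V.v x = ⊤ ↔ (le x 0 ∧ le 0 x))) := by
  by_cases hA : le (-1) 0
  · left
    refine ⟨hQR1, hQR2, hQR3, fun x y z h => ?_⟩
    exact QORProof.QO.a_add (q := ⟨le, hrefl, htrans, htotal, hQR1, hQR2, hQR3, hQR4, hQR5⟩)
      hA h z
  · right
    let q : QORProof.QOB R :=
      ⟨⟨le, hrefl, htrans, htotal, hQR1, hQR2, hQR3, hQR4, hQR5⟩, hA⟩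
    refine ⟨q.val, fun x y => QORProof.QOB.vfun_le_iff (p := q) x y, fun x => ?_⟩
    constructor
    · intro h
      exact ⟨(QORProof.QOB.vfun_eq_top_iff (p := q) x).1 h, q.b_bot x⟩
    · intro h
      exact (QORProof.QOB.vfun_eq_top_iff (p := q) x).2 h.1
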